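/- With the normalized separable ansatz, y_ζ(R) = φ_ζ'(R)/λ_ζ(R) satisfies |y_ζ(R) − y_ζ̃(R)| ≤ R²‖ζ − ζ̃‖_∞ whenever ‖ζ‖_∞, ‖ζ̃‖_∞ ≤ δ ≤ 1/2; in particular, taking ζ̃ = 0, |y_ζ(R) − 1| ≤ R²δ. -/

import Mathlib

open Set

/-- The normalization constant `a(ζ) = φ'(0) = 1 − ∫₀¹ (1−τ)τζ(τ)dτ` (so `φ(1) = 1`). -/
noncomputable def acoef (ζ : ℝ → ℝ) : ℝ := 1 - ∫ τ in (0:ℝ)..1, (1 - τ) * τ * ζ τ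

/-- `φ_ζ(R) = a(ζ)R + ∫₀^R (R−τ)τζ(τ)dτ`. -/
noncomputable def phi (ζ : ℝ → ℝ) (R : ℝ) : ℝ :=
  acoef ζ * R + ∫ τ in (0:ℝ)..R, (R - τ) * τ * ζ τ

/-- `φ_ζ'(R) = a(ζ) + ∫₀^R τζ(τ)dτ`. -/
noncomputable def dphi (ζ : ℝ → ℝ) (R : ℝ) : ℝ :=
  acoef ζ + ∫ τ in (0:ℝ)..R, τ * ζ τ

/-- `λ_ζ(R) = φ_ζ(R)/R` for `R > 0`, with `λ_ζ(0) = a(ζ)`. -/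
noncomputable def lam (ζ : ℝ → ℝ) (R : ℝ) : ℝ :=
  if R = 0 then acoef ζ else phi ζ R / R

/-- `y_ζ(R) = φ_ζ'(R)/λ_ζ(R)`. -/
noncomputable def yfun (ζ : ℝ → ℝ) (R : ℝ) : ℝ := dphi ζ R / lam ζ R

section Helpers
open MeasureTheory intervalIntegral

lemma myIntg (f w : ℝ → ℝ) (hf : ContinuousOn f (Icc 0 1)) (hw : Continuous w)
    (R : ℝ) (hR : R ∈ Icc (0:ℝ) 1) :
    IntervalIntegrable (fun τ => w τ * f τ) MeasureTheory.volume 0 R := by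
  apply ContinuousOn.intervalIntegrable
  rw [uIcc_of_le hR.1]
  exact hw.continuousOn.mul (hf.mono (Icc_subset_Icc le_rfl hR.2))

lemma myBound (f w : ℝ → ℝ) (M : ℝ) (hf : ContinuousOn f (Icc 0 1))
    (hfM : ∀ τ ∈ Icc (0:ℝ) 1, |f τ| ≤ M) (hw : Continuous w)
    (R : ℝ) (hR : R ∈ Icc (0:ℝ) 1) (hwpos : ∀ τ ∈ Icc (0:ℝ) R, 0 ≤ w τ) :
    |∫ τ in (0:ℝ)..R, w τ * f τ| ≤ M * ∫ τ in (0:ℝ)..R, w τ := by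
  have hsub : Icc (0:ℝ) R ⊆ Icc 0 1 := Icc_subset_Icc le_rfl hR.2
  calc |∫ τ in (0:ℝ)..R, w τ * f τ| ≤ ∫ τ in (0:ℝ)..R, |w τ * f τ| :=
        intervalIntegral.abs_integral_le_integral_abs hR.1
    _ ≤ ∫ τ in (0:ℝ)..R, w τ * M := by
        apply intervalIntegral.integral_mono_on hR.1
        · exact (myIntg f w hf hw R hR).abs
        · have : ContinuousOn (fun τ => w τ * M) (uIcc (0:ℝ) R) := hw.continuousOn.mul continuousOn_const
          exact this.intervalIntegrable
        · intro τ hτ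
          rw [abs_mul, abs_of_nonneg (hwpos τ hτ)]
          exact mul_le_mul_of_nonneg_left (hfM τ (hsub hτ)) (hwpos τ hτ)
    _ = M * ∫ τ in (0:ℝ)..R, w τ := by
        rw [← intervalIntegral.integral_const_mul]
        apply intervalIntegral.integral_congr; intro τ _; ring

lemma est1 (f : ℝ → ℝ) (M : ℝ) (hf : ContinuousOn f (Icc 0 1))
    (hfM : ∀ τ ∈ Icc (0:ℝ) 1, |f τ| ≤ M) :
    |∫ τ in (0:ℝ)..1, (1 - τ) * τ * f τ| ≤ M / 6 := by
  have h := myBound f (fun τ => (1 - τ) * τ) M hf hfM ((continuous_const.sub continuous_id').mul continuous_id') 1 ⟨zero_le_one, le_rfl⟩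
    (fun τ hτ => mul_nonneg (by linarith [hτ.2]) hτ.1)
  have hval : (∫ τ in (0:ℝ)..1, (1 - τ) * τ) = 1/6 := by
    have hcg : (∫ τ in (0:ℝ)..1, (1 - τ)*τ) = ∫ τ in (0:ℝ)..1, ((1:ℝ)*τ - τ^2) := by
      apply intervalIntegral.integral_congr; intro τ _; ring
    rw [hcg, intervalIntegral.integral_sub (f := fun τ => (1:ℝ)*τ) (g := fun τ => τ^2) ((continuous_const.mul continuous_id').intervalIntegrable _ _)
      ((continuous_pow 2).intervalIntegrable _ _), intervalIntegral.integral_const_mul, integral_id, integral_pow]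
    norm_num
  calc |∫ τ in (0:ℝ)..1, (1 - τ) * τ * f τ| ≤ M * (1/6) := by rw [← hval]; exact h
    _ = M / 6 := by ring

lemma est2 (f : ℝ → ℝ) (M : ℝ) (hf : ContinuousOn f (Icc 0 1))
    (hfM : ∀ τ ∈ Icc (0:ℝ) 1, |f τ| ≤ M) (R : ℝ) (hR : R ∈ Icc (0:ℝ) 1) :
    |∫ τ in (0:ℝ)..R, (R - τ) * τ * f τ| ≤ M * R^3 / 6 := by
  have h := myBound f (fun τ => (R - τ) * τ) M hf hfM ((continuous_const.sub continuous_id').mul continuous_id') R hR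
    (fun τ hτ => mul_nonneg (by linarith [hτ.2]) hτ.1)
  have hval : (∫ τ in (0:ℝ)..R, (R - τ)*τ) = R^3/6 := by
    have hcg : (∫ τ in (0:ℝ)..R, (R - τ)*τ) = ∫ τ in (0:ℝ)..R, (R*τ - τ^2) := by
      apply intervalIntegral.integral_congr; intro τ _; ring
    rw [hcg, intervalIntegral.integral_sub (f := fun τ => R*τ) (g := fun τ => τ^2) ((continuous_const.mul continuous_id').intervalIntegrable _ _)
      ((continuous_pow 2).intervalIntegrable _ _), intervalIntegral.integral_const_mul, integral_id, integral_pow]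
    ring
  calc |∫ τ in (0:ℝ)..R, (R - τ) * τ * f τ| ≤ M * (R^3/6) := by rw [← hval]; exact h
    _ = M * R^3 / 6 := by ring

lemma est3 (f : ℝ → ℝ) (M : ℝ) (hf : ContinuousOn f (Icc 0 1))
    (hfM : ∀ τ ∈ Icc (0:ℝ) 1, |f τ| ≤ M) (R : ℝ) (hR : R ∈ Icc (0:ℝ) 1) :
    |∫ τ in (0:ℝ)..R, τ^2 * f τ| ≤ M * R^3 / 3 := by
  have h := myBound f (fun τ => τ^2) M hf hfM (continuous_pow 2) R hR (fun τ _ => sq_nonneg τ)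
  have hval : (∫ τ in (0:ℝ)..R, τ^2) = R^3/3 := by rw [integral_pow]; ring
  calc |∫ τ in (0:ℝ)..R, τ^2 * f τ| ≤ M * (R^3/3) := by rw [← hval]; exact h
    _ = M * R^3 / 3 := by ring

lemma ident (ζ : ℝ → ℝ) (hζ : ContinuousOn ζ (Icc 0 1)) (R : ℝ) (hR : R ∈ Icc (0:ℝ) 1) :
    R * dphi ζ R - phi ζ R = ∫ τ in (0:ℝ)..R, τ^2 * ζ τ := by
  have h1 : R * (∫ τ in (0:ℝ)..R, τ * ζ τ) = ∫ τ in (0:ℝ)..R, R * τ * ζ τ := by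
    rw [← intervalIntegral.integral_const_mul]
    apply intervalIntegral.integral_congr; intro τ _; ring
  have h2 : (∫ τ in (0:ℝ)..R, R*τ*ζ τ) - (∫ τ in (0:ℝ)..R, (R - τ)*τ*ζ τ)
      = ∫ τ in (0:ℝ)..R, τ^2*ζ τ := by
    rw [← intervalIntegral.integral_sub (myIntg ζ (fun τ => R*τ) hζ (continuous_const.mul continuous_id') R hR)
      (myIntg ζ (fun τ => (R-τ)*τ) hζ ((continuous_const.sub continuous_id').mul continuous_id') R hR)]
    apply intervalIntegral.integral_congr; intro τ _; ring
  unfold dphi phi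
  rw [mul_add, h1]
  linarith [h2]

lemma yzero (R : ℝ) : yfun (fun _ => (0:ℝ)) R = 1 := by
  have ha : acoef (fun _ => (0:ℝ)) = 1 := by unfold acoef; simp
  unfold yfun lam dphi phi
  rcases eq_or_ne R 0 with h | h
  · simp [h, ha]
  · simp [ha, div_self h]

lemma key (δ C : ℝ) (hδ : δ ≤ 1/2) (hδ0 : 0 ≤ δ) (hC0 : 0 ≤ C) (ζ ζt : ℝ → ℝ)
    (hζ : ContinuousOn ζ (Icc 0 1)) (hζt : ContinuousOn ζt (Icc 0 1))
    (hζδ : ∀ τ ∈ Icc (0:ℝ) 1, |ζ τ| ≤ δ) (hζtδ : ∀ τ ∈ Icc (0:ℝ) 1, |ζt τ| ≤ δ)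
    (hC : ∀ τ ∈ Icc (0:ℝ) 1, |ζ τ - ζt τ| ≤ C) :
    ∀ R ∈ Icc (0:ℝ) 1, |yfun ζ R - yfun ζt R| ≤ R ^ 2 * C := by
  have hd : ContinuousOn (fun τ => ζ τ - ζt τ) (Icc 0 1) := hζ.sub hζt
  -- acoef estimates
  have ha : |acoef ζ - 1| ≤ δ / 6 := by
    have : acoef ζ - 1 = -(∫ τ in (0:ℝ)..1, (1 - τ) * τ * ζ τ) := by unfold acoef; ring
    rw [this, abs_neg]; exact est1 ζ δ hζ hζδ
  have hat : |acoef ζt - 1| ≤ δ / 6 := by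
    have : acoef ζt - 1 = -(∫ τ in (0:ℝ)..1, (1 - τ) * τ * ζt τ) := by unfold acoef; ring
    rw [this, abs_neg]; exact est1 ζt δ hζt hζtδ
  have hsplit1 : (∫ τ in (0:ℝ)..1, (1 - τ)*τ*ζ τ) - (∫ τ in (0:ℝ)..1, (1 - τ)*τ*ζt τ)
      = ∫ τ in (0:ℝ)..1, (1 - τ)*τ*(ζ τ - ζt τ) := by
    rw [← intervalIntegral.integral_sub (myIntg ζ (fun τ => (1 - τ)*τ) hζ ((continuous_const.sub continuous_id').mul continuous_id') 1 ⟨zero_le_one, le_rfl⟩)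
      (myIntg ζt (fun τ => (1 - τ)*τ) hζt ((continuous_const.sub continuous_id').mul continuous_id') 1 ⟨zero_le_one, le_rfl⟩)]
    apply intervalIntegral.integral_congr; intro τ _; ring
  have hadiff : |acoef ζ - acoef ζt| ≤ C / 6 := by
    have e : acoef ζ - acoef ζt = -(∫ τ in (0:ℝ)..1, (1 - τ)*τ*(ζ τ - ζt τ)) := by
      unfold acoef; rw [← hsplit1]; ring
    rw [e, abs_neg]; exact est1 _ C hd hC
  intro R hR
  rcases eq_or_lt_of_le hR.1 with h0 | hR0
  · -- R = 0
    have h0' : R = 0 := h0.symm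
    subst h0'
    have hane : acoef ζ ≠ 0 := by
      have := abs_le.mp ha; intro h; rw [h] at this; linarith [this.1]
    have hatne : acoef ζt ≠ 0 := by
      have := abs_le.mp hat; intro h; rw [h] at this; linarith [this.1]
    have e1 : yfun ζ 0 = 1 := by
      unfold yfun lam dphi
      rw [if_pos rfl, intervalIntegral.integral_same, add_zero, div_self hane]
    have e2 : yfun ζt 0 = 1 := by
      unfold yfun lam dphi
      rw [if_pos rfl, intervalIntegral.integral_same, add_zero, div_self hatne]
    simp [e1, e2]
  · -- R > 0
    have hR1 : R ≤ 1 := hR.2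
    have hR3 : R^3 ≤ R := by nlinarith [mul_nonneg (mul_nonneg hR0.le (by linarith : (0:ℝ) ≤ 1 - R)) (by linarith : (0:ℝ) ≤ 1 + R)]
    -- phi bounds
    have hPb : |phi ζ R - R| ≤ δ * R / 3 := by
      have e : phi ζ R - R = (acoef ζ - 1)*R + ∫ τ in (0:ℝ)..R, (R - τ)*τ*ζ τ := by
        unfold phi; ring
      rw [e]
      have := abs_add_le ((acoef ζ - 1)*R) (∫ τ in (0:ℝ)..R, (R - τ)*τ*ζ τ)
      rw [abs_mul, abs_of_pos hR0] at this
      have h2 := est2 ζ δ hζ hζδ R hR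
      nlinarith [mul_le_mul_of_nonneg_right ha hR0.le]
    have hPtb : |phi ζt R - R| ≤ δ * R / 3 := by
      have e : phi ζt R - R = (acoef ζt - 1)*R + ∫ τ in (0:ℝ)..R, (R - τ)*τ*ζt τ := by
        unfold phi; ring
      rw [e]
      have := abs_add_le ((acoef ζt - 1)*R) (∫ τ in (0:ℝ)..R, (R - τ)*τ*ζt τ)
      rw [abs_mul, abs_of_pos hR0] at this
      have h2 := est2 ζt δ hζt hζtδ R hR
      nlinarith [mul_le_mul_of_nonneg_right hat hR0.le]
    have hP5 : 5*R/6 ≤ phi ζ R := by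
      have := (abs_le.mp hPb).1; nlinarith
    have hPt5 : 5*R/6 ≤ phi ζt R := by
      have := (abs_le.mp hPtb).1; nlinarith
    have hP7 : phi ζ R ≤ 7*R/6 := by
      have := (abs_le.mp hPb).2; nlinarith
    have hPt7 : phi ζt R ≤ 7*R/6 := by
      have := (abs_le.mp hPtb).2; nlinarith
    have hPpos : 0 < phi ζ R := lt_of_lt_of_le (by linarith) hP5
    have hPtpos : 0 < phi ζt R := lt_of_lt_of_le (by linarith) hPt5
    -- phi difference
    have hsplit2 : (∫ τ in (0:ℝ)..R, (R - τ)*τ*ζ τ) - (∫ τ in (0:ℝ)..R, (R - τ)*τ*ζt τ)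
        = ∫ τ in (0:ℝ)..R, (R - τ)*τ*(ζ τ - ζt τ) := by
      rw [← intervalIntegral.integral_sub (myIntg ζ (fun τ => (R - τ)*τ) hζ ((continuous_const.sub continuous_id').mul continuous_id') R hR)
        (myIntg ζt (fun τ => (R - τ)*τ) hζt ((continuous_const.sub continuous_id').mul continuous_id') R hR)]
      apply intervalIntegral.integral_congr; intro τ _; ring
    have hPdiff : |phi ζ R - phi ζt R| ≤ C * R / 3 := by
      have e : phi ζ R - phi ζt R
          = (acoef ζ - acoef ζt)*R + ∫ τ in (0:ℝ)..R, (R - τ)*τ*(ζ τ - ζt τ) := by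
        unfold phi; rw [← hsplit2]; ring
      rw [e]
      have := abs_add_le ((acoef ζ - acoef ζt)*R) (∫ τ in (0:ℝ)..R, (R - τ)*τ*(ζ τ - ζt τ))
      rw [abs_mul, abs_of_pos hR0] at this
      have h2 := est2 _ C hd hC R hR
      nlinarith [mul_le_mul_of_nonneg_right hadiff hR0.le]
    -- L estimates
    have hsplit3 : (∫ τ in (0:ℝ)..R, τ^2*ζ τ) - (∫ τ in (0:ℝ)..R, τ^2*ζt τ)
        = ∫ τ in (0:ℝ)..R, τ^2*(ζ τ - ζt τ) := by
      rw [← intervalIntegral.integral_sub (myIntg ζ (fun τ => τ^2) hζ (continuous_pow 2) R hR)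
        (myIntg ζt (fun τ => τ^2) hζt (continuous_pow 2) R hR)]
      apply intervalIntegral.integral_congr; intro τ _; ring
    have hD : |∫ τ in (0:ℝ)..R, τ^2*(ζ τ - ζt τ)| ≤ C * R^3 / 3 := est3 _ C hd hC R hR
    have hLt : |∫ τ in (0:ℝ)..R, τ^2*ζt τ| ≤ δ * R^3 / 3 := est3 ζt δ hζt hζtδ R hR
    -- y representations
    have hy : yfun ζ R = R * dphi ζ R / phi ζ R := by
      unfold yfun lam; rw [if_neg hR0.ne', div_div_eq_mul_div, mul_comm]
    have hyt : yfun ζt R = R * dphi ζt R / phi ζt R := by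
      unfold yfun lam; rw [if_neg hR0.ne', div_div_eq_mul_div, mul_comm]
    have hid1 := ident ζ hζ R hR
    have hid2 := ident ζt hζt R hR
    have hnum : R * dphi ζ R * phi ζt R - phi ζ R * (R * dphi ζt R)
        = (∫ τ in (0:ℝ)..R, τ^2*(ζ τ - ζt τ)) * phi ζt R
          + (∫ τ in (0:ℝ)..R, τ^2*ζt τ) * (phi ζt R - phi ζ R) := by
      rw [← hsplit3]
      linear_combination phi ζt R * hid1 - phi ζ R * hid2
    rw [hy, hyt, div_sub_div _ _ hPpos.ne' hPtpos.ne', abs_div, hnum,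
      abs_of_pos (mul_pos hPpos hPtpos), div_le_iff₀ (mul_pos hPpos hPtpos)]
    have t0 : |(∫ τ in (0:ℝ)..R, τ^2*(ζ τ - ζt τ)) * phi ζt R
          + (∫ τ in (0:ℝ)..R, τ^2*ζt τ) * (phi ζt R - phi ζ R)|
        ≤ |∫ τ in (0:ℝ)..R, τ^2*(ζ τ - ζt τ)| * |phi ζt R|
          + |∫ τ in (0:ℝ)..R, τ^2*ζt τ| * |phi ζt R - phi ζ R| := by
      refine (abs_add_le _ _).trans ?_
      rw [abs_mul, abs_mul]
    have hPtabs : |phi ζt R| ≤ 7*R/6 := by rw [abs_of_pos hPtpos]; exact hPt7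
    have t1 : |∫ τ in (0:ℝ)..R, τ^2*(ζ τ - ζt τ)| * |phi ζt R| ≤ (C*R^3/3) * (7*R/6) :=
      mul_le_mul hD hPtabs (abs_nonneg _) (by positivity)
    have t2 : |∫ τ in (0:ℝ)..R, τ^2*ζt τ| * |phi ζt R - phi ζ R| ≤ (δ*R^3/3) * (C*R/3) := by
      refine mul_le_mul hLt ?_ (abs_nonneg _) (by positivity)
      rw [abs_sub_comm]; exact hPdiff
    have t3 : R^2*C*((5*R/6)*(5*R/6)) ≤ R^2*C*(phi ζ R * phi ζt R) := by
      apply mul_le_mul_of_nonneg_left _ (by positivity)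
      exact mul_le_mul hP5 hPt5 (by positivity) (le_trans (by positivity) hP5)
    have e1 : (C*R^3/3) * (7*R/6) = 7/18*(C*R^4) := by ring
    have e2 : (δ*R^3/3) * (C*R/3) = (1/9)*(δ*(C*R^4)) := by ring
    have e3 : R^2*C*((5*R/6)*(5*R/6)) = 25/36*(C*R^4) := by ring
    rw [e1] at t1; rw [e2] at t2; rw [e3] at t3
    have q : δ*(C*R^4) ≤ (1/2)*(C*R^4) := mul_le_mul_of_nonneg_right hδ (by positivity)
    have hX : (0:ℝ) ≤ C * R ^ 4 := by positivity
    linarith [t0, t1, t2, t3, q, hX]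

end Helpers

/-- For `‖ζ‖_∞, ‖ζ̃‖_∞ ≤ δ ≤ 1/2`, one has `|y_ζ(R) − y_ζ̃(R)| ≤ R²‖ζ−ζ̃‖_∞`;
in particular (taking `ζ̃ = 0`), `|y_ζ(R) − 1| ≤ R²δ`. -/
theorem stmt_13 (δ : ℝ) (hδ : δ ≤ 1/2) (ζ ζt : ℝ → ℝ)
    (hζ : ContinuousOn ζ (Icc 0 1)) (hζt : ContinuousOn ζt (Icc 0 1))
    (hζδ : ∀ τ ∈ Icc (0:ℝ) 1, |ζ τ| ≤ δ) (hζtδ : ∀ τ ∈ Icc (0:ℝ) 1, |ζt τ| ≤ δ)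
    (C : ℝ) (hC : ∀ τ ∈ Icc (0:ℝ) 1, |ζ τ - ζt τ| ≤ C) :
    (∀ R ∈ Icc (0:ℝ) 1, |yfun ζ R - yfun ζt R| ≤ R ^ 2 * C) ∧
    (∀ R ∈ Icc (0:ℝ) 1, |yfun ζ R - 1| ≤ R ^ 2 * δ) := by
  have hδ0 : 0 ≤ δ := le_trans (abs_nonneg _) (hζδ 0 ⟨le_rfl, zero_le_one⟩)
  have hC0 : 0 ≤ C := le_trans (abs_nonneg _) (hC 0 ⟨le_rfl, zero_le_one⟩)
  constructor
  · exact key δ C hδ hδ0 hC0 ζ ζt hζ hζt hζδ hζtδ hC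
  · intro R hR
    have h := key δ δ hδ hδ0 hδ0 ζ (fun _ => 0) hζ continuousOn_const hζδ
      (fun τ _ => by simpa using hδ0) (fun τ hτ => by simpa using hζδ τ hτ) R hR
    rwa [yzero] at h
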